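/- Let b, σ : ℝ → ℝ with σ ∈ C²_b and b globally Lipschitz, and let φ be the flow of y' = σ(y). Define f(x,y) = exp(−∫_0^x σ'(φ(y,s)) ds) · b(φ(y,x)). Then f is C¹ in y and ∂f/∂y(x,y) = b'(φ(y,x)) − f(x,y) · ∫_0^x σ''(φ(y,s)) · ∂φ/∂x₁(y,s) ds, assuming b ∈ C¹. -/

import Mathlib

open MeasureTheory Filter Metric Set Topology

theorem stmt_17 (σ b : ℝ → ℝ) (hσ : ContDiff ℝ 2 σ)
    (hσb : ∃ C : ℝ, ∀ x, |σ x| ≤ C ∧ |deriv σ x| ≤ C ∧ |deriv (deriv σ) x| ≤ C)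
    (hb : ContDiff ℝ 1 b) (hbLip : ∃ L : NNReal, LipschitzWith L b)
    (φ : ℝ → ℝ → ℝ)
    (hφ0 : ∀ x₁ : ℝ, φ x₁ 0 = x₁)
    (hφ : ∀ x₁ x₂ : ℝ, HasDerivAt (φ x₁) (σ (φ x₁ x₂)) x₂)
    (f : ℝ → ℝ → ℝ)
    (hf : ∀ x y : ℝ,
      f x y = Real.exp (-∫ s in (0 : ℝ)..x, deriv σ (φ y s)) * b (φ y x)) :
    ∀ x y : ℝ, HasDerivAt (fun y' => f x y')
      (deriv b (φ y x) -
        f x y * ∫ s in (0 : ℝ)..x, deriv (deriv σ) (φ y s) * deriv (fun z => φ z s) y)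
      y := by
  obtain ⟨C, hC⟩ := hσb
  have hC0 : 0 ≤ C := le_trans (abs_nonneg _) (hC 0).1
  have h2 : (2 : WithTop ℕ∞) = 1 + 1 := by norm_num
  have hσ1 : ContDiff ℝ 1 (deriv σ) := (contDiff_succ_iff_deriv.mp (h2 ▸ hσ)).2.2
  have hσdiff : Differentiable ℝ σ := hσ.differentiable (by norm_num)
  have hσ'diff : Differentiable ℝ (deriv σ) := hσ1.differentiable one_ne_zero
  have hσ'cont : Continuous (deriv σ) := hσ'diff.continuous
  have hσ''cont : Continuous (deriv (deriv σ)) := hσ1.continuous_deriv le_rfl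
  have hσ'' : ∀ p : ℝ, HasDerivAt (deriv σ) (deriv (deriv σ) p) p :=
    fun p => (hσ'diff p).hasDerivAt
  -- deriv σ is C-Lipschitz
  have hσ'lip : ∀ p q : ℝ, |deriv σ q - deriv σ p| ≤ C * |q - p| := by
    intro p q
    have := Convex.norm_image_sub_le_of_norm_deriv_le
      (fun u (_ : u ∈ (Set.univ : Set ℝ)) => hσ'diff u)
      (fun u _ => by simpa using (hC u).2.2) convex_univ (Set.mem_univ p) (Set.mem_univ q)
    simpa using this
  have hφc : ∀ y : ℝ, Continuous (φ y) :=
    fun y => continuous_iff_continuousAt.mpr fun s => (hφ y s).continuousAt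
  -- the averaged derivative
  set a : ℝ → ℝ → ℝ → ℝ :=
    fun y₁ y₂ s => ∫ t in (0:ℝ)..1, deriv σ ((1-t) * φ y₁ s + t * φ y₂ s) with ha_def
  -- mean value identity
  have mvt : ∀ p q : ℝ,
      σ q - σ p = (q - p) * ∫ t in (0:ℝ)..1, deriv σ ((1-t)*p + t*q) := by
    intro p q
    rcases eq_or_ne q p with h | h
    · simp [h]
    · have hrw : ∀ t : ℝ, (1-t)*p + t*q = (q - p) * t + p := fun t => by ring
      rw [intervalIntegral.integral_congr (g := fun t => deriv σ ((q-p)*t + p))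
        (fun t _ => by rw [hrw])]
      rw [intervalIntegral.integral_comp_mul_add (f := deriv σ) (sub_ne_zero.mpr h) p]
      have e1 : (q-p) * 0 + p = p := by ring
      have e2 : (q-p) * 1 + p = q := by ring
      rw [e1, e2, smul_eq_mul,
        intervalIntegral.integral_deriv_eq_sub (fun u _ => hσdiff u)
          (hσ'cont.intervalIntegrable _ _)]
      rw [mul_inv_cancel_left₀ (sub_ne_zero.mpr h)]
  have hacont : ∀ y₁ y₂ : ℝ, Continuous (fun s => a y₁ y₂ s) := by
    intro y₁ y₂
    apply intervalIntegral.continuous_parametric_intervalIntegral_of_continuous'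
      (f := fun s t => deriv σ ((1-t) * φ y₁ s + t * φ y₂ s))
    exact hσ'cont.comp
      (((continuous_const.sub continuous_snd).mul ((hφc y₁).comp continuous_fst)).add
        (continuous_snd.mul ((hφc y₂).comp continuous_fst)))
  have habound : ∀ y₁ y₂ s : ℝ, |a y₁ y₂ s| ≤ C := by
    intro y₁ y₂ s
    have := intervalIntegral.norm_integral_le_of_norm_le_const
      (C := C) (f := fun t => deriv σ ((1-t) * φ y₁ s + t * φ y₂ s)) (a := 0) (b := 1)
      (fun t _ => by simpa using (hC _).2.1)
    simpa using this
  -- Key identity A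
  have keyA : ∀ y₁ y₂ x : ℝ,
      φ y₂ x - φ y₁ x = (y₂ - y₁) * Real.exp (∫ s in (0:ℝ)..x, a y₁ y₂ s) := by
    intro y₁ y₂ x
    have hA : ∀ u : ℝ, HasDerivAt (fun u => ∫ s in (0:ℝ)..u, a y₁ y₂ s) (a y₁ y₂ u) u := by
      intro u
      exact intervalIntegral.integral_hasDerivAt_right
        ((hacont y₁ y₂).intervalIntegrable _ _)
        ((hacont y₁ y₂).stronglyMeasurableAtFilter _ _)
        (hacont y₁ y₂).continuousAt
    have hG : ∀ u : ℝ, HasDerivAt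
        (fun u => (φ y₂ u - φ y₁ u) * Real.exp (-(∫ s in (0:ℝ)..u, a y₁ y₂ s))) 0 u := by
      intro u
      have h1 := (hφ y₂ u).sub (hφ y₁ u)
      have h2 := ((hA u).neg).exp
      have h3 := h1.mul h2
      refine h3.congr_deriv ?_
      have hm := mvt (φ y₁ u) (φ y₂ u)
      rw [show (∫ t in (0:ℝ)..1, deriv σ ((1-t) * φ y₁ u + t * φ y₂ u)) = a y₁ y₂ u from rfl]
        at hm
      simp only [Pi.sub_apply, Pi.neg_apply]
      rw [hm]; ring
    have hconst := is_const_of_deriv_eq_zero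
      (f := fun u => (φ y₂ u - φ y₁ u) * Real.exp (-(∫ s in (0:ℝ)..u, a y₁ y₂ s)))
      (fun u => (hG u).differentiableAt) (fun u => (hG u).deriv) x 0
    rw [intervalIntegral.integral_same, neg_zero, Real.exp_zero, mul_one, hφ0, hφ0] at hconst
    rw [← hconst, Real.exp_neg]
    field_simp
  -- Lipschitz dependence on initial condition
  have keyB : ∀ y₁ y₂ x : ℝ, |φ y₂ x - φ y₁ x| ≤ |y₂ - y₁| * Real.exp (C * |x|) := by
    intro y₁ y₂ x
    rw [keyA y₁ y₂ x, abs_mul, Real.abs_exp]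
    gcongr
    calc (∫ s in (0:ℝ)..x, a y₁ y₂ s) ≤ |∫ s in (0:ℝ)..x, a y₁ y₂ s| := le_abs_self _
      _ ≤ C * |x - 0| := by
          have := intervalIntegral.norm_integral_le_of_norm_le_const (a := 0) (b := x)
            (f := fun s => a y₁ y₂ s) (C := C)
            (fun s _ => by rw [Real.norm_eq_abs]; exact habound y₁ y₂ s)
          simpa using this
      _ = C * |x| := by rw [sub_zero]
  have haself : ∀ y s : ℝ, a y y s = deriv σ (φ y s) := by
    intro y s
    have h : ∀ t : ℝ, (1-t) * φ y s + t * φ y s = φ y s := fun t => by ring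
    rw [show a y y s = ∫ t in (0:ℝ)..1, deriv σ ((1-t) * φ y s + t * φ y s) from rfl,
      intervalIntegral.integral_congr (g := fun _ => deriv σ (φ y s)) (fun t _ => by rw [h])]
    simp
  have habs : ∀ x s : ℝ, s ∈ Set.uIoc (0:ℝ) x → |s| ≤ |x| := by
    intro x s hs
    rcases Set.mem_uIoc.mp hs with ⟨h1, h2⟩ | ⟨h1, h2⟩
    · rw [abs_of_pos h1]; exact h2.trans (le_abs_self x)
    · rw [abs_of_nonpos h2]; have := neg_abs_le x; linarith
  -- derivative of the flow in the initial condition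
  have hD : ∀ y x : ℝ, HasDerivAt (fun z => φ z x)
      (Real.exp (∫ s in (0:ℝ)..x, deriv σ (φ y s))) y := by
    intro y x
    rw [hasDerivAt_iff_tendsto_slope]
    have heq : ∀ z ∈ ({y}ᶜ : Set ℝ),
        Real.exp (∫ s in (0:ℝ)..x, a y z s) = slope (fun z => φ z x) y z := by
      intro z hz
      have hz' : z - y ≠ 0 := sub_ne_zero.mpr hz
      rw [slope_def_field, keyA y z x, mul_comm, mul_div_assoc, div_self hz', mul_one]
    have hbound : ∀ z : ℝ,
        ‖(∫ s in (0:ℝ)..x, a y z s) - (∫ s in (0:ℝ)..x, deriv σ (φ y s))‖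
          ≤ (C * Real.exp (C * |x|) * |x|) * |z - y| := by
      intro z
      have hintσ : IntervalIntegrable (fun s => deriv σ (φ y s)) volume 0 x := by
        exact (hσ'cont.comp (hφc y)).intervalIntegrable 0 x
      rw [← intervalIntegral.integral_sub ((hacont y z).intervalIntegrable _ _) hintσ]
      have hpt : ∀ s ∈ Set.uIoc (0:ℝ) x,
          ‖a y z s - deriv σ (φ y s)‖ ≤ C * Real.exp (C * |x|) * |z - y| := by
        intro s hs
        have hsx : |s| ≤ |x| := habs x s hs
        have hsub : a y z s - deriv σ (φ y s)
            = ∫ t in (0:ℝ)..1, (deriv σ ((1-t) * φ y s + t * φ z s) - deriv σ (φ y s)) := by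
          have hint1 : IntervalIntegrable
              (fun t : ℝ => deriv σ ((1-t) * φ y s + t * φ z s)) volume 0 1 := by
            apply Continuous.intervalIntegrable
            exact hσ'cont.comp (((continuous_const.sub continuous_id).mul
              continuous_const).add (continuous_id.mul continuous_const))
          rw [intervalIntegral.integral_sub hint1 intervalIntegrable_const]
          simp [ha_def]
        rw [hsub]
        have hptt : ∀ t ∈ Set.uIoc (0:ℝ) 1,
            ‖deriv σ ((1-t) * φ y s + t * φ z s) - deriv σ (φ y s)‖
              ≤ C * Real.exp (C * |x|) * |z - y| := by
          intro t ht
          have ht01 : 0 < t ∧ t ≤ 1 := by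
            rcases Set.mem_uIoc.mp ht with h | h
            · exact ⟨h.1, h.2⟩
            · exfalso; linarith [h.1, h.2]
          have h1 : |deriv σ ((1-t) * φ y s + t * φ z s) - deriv σ (φ y s)|
              ≤ C * |((1-t) * φ y s + t * φ z s) - φ y s| := hσ'lip _ _
          have h2 : ((1-t) * φ y s + t * φ z s) - φ y s = t * (φ z s - φ y s) := by ring
          have h3 : |t * (φ z s - φ y s)| ≤ |φ z s - φ y s| := by
            rw [abs_mul, abs_of_pos ht01.1]
            nlinarith [abs_nonneg (φ z s - φ y s), ht01.1, ht01.2]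
          have h4 : |φ z s - φ y s| ≤ |z - y| * Real.exp (C * |s|) := keyB y z s
          have h5 : Real.exp (C * |s|) ≤ Real.exp (C * |x|) :=
            Real.exp_le_exp.mpr (by nlinarith)
          calc ‖deriv σ ((1-t) * φ y s + t * φ z s) - deriv σ (φ y s)‖
              ≤ C * |((1-t) * φ y s + t * φ z s) - φ y s| := h1
            _ = C * |t * (φ z s - φ y s)| := by rw [h2]
            _ ≤ C * |φ z s - φ y s| := by nlinarith [abs_nonneg (t * (φ z s - φ y s))]
            _ ≤ C * (|z - y| * Real.exp (C * |s|)) :=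
                mul_le_mul_of_nonneg_left h4 hC0
            _ ≤ C * (|z - y| * Real.exp (C * |x|)) := by gcongr
            _ = C * Real.exp (C * |x|) * |z - y| := by ring
        calc ‖∫ t in (0:ℝ)..1, (deriv σ ((1-t) * φ y s + t * φ z s) - deriv σ (φ y s))‖
            ≤ C * Real.exp (C * |x|) * |z - y| * |1 - 0| :=
              intervalIntegral.norm_integral_le_of_norm_le_const hptt
          _ = C * Real.exp (C * |x|) * |z - y| := by norm_num
      calc ‖∫ s in (0:ℝ)..x, (a y z s - deriv σ (φ y s))‖
          ≤ C * Real.exp (C * |x|) * |z - y| * |x - 0| :=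
            intervalIntegral.norm_integral_le_of_norm_le_const hpt
        _ = (C * Real.exp (C * |x|) * |x|) * |z - y| := by rw [sub_zero]; ring
    have h0 : Tendsto (fun z => (∫ s in (0:ℝ)..x, a y z s)
        - (∫ s in (0:ℝ)..x, deriv σ (φ y s))) (𝓝 y) (𝓝 0) := by
      apply squeeze_zero_norm hbound
      have h1 : Tendsto (fun z : ℝ => |z - y|) (𝓝 y) (𝓝 0) := by
        have := ((continuous_id.sub (continuous_const (y := y))).abs).tendsto y
        simpa using this
      have := h1.const_mul (C * Real.exp (C * |x|) * |x|)
      simpa using this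
    have h1 : Tendsto (fun z => ∫ s in (0:ℝ)..x, a y z s) (𝓝 y)
        (𝓝 (∫ s in (0:ℝ)..x, deriv σ (φ y s))) := by
      have := h0.add (tendsto_const_nhds (x := ∫ s in (0:ℝ)..x, deriv σ (φ y s)))
      simpa using this
    have htend : Tendsto (fun z => Real.exp (∫ s in (0:ℝ)..x, a y z s)) (𝓝 y)
        (𝓝 (Real.exp (∫ s in (0:ℝ)..x, deriv σ (φ y s)))) :=
      (Real.continuous_exp.tendsto _).comp h1
    exact Tendsto.congr' (eventually_nhdsWithin_of_forall heq)
      (htend.mono_left nhdsWithin_le_nhds)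
  -- main part
  intro x y
  have hDeriv_eq : ∀ s : ℝ, deriv (fun z => φ z s) y
      = Real.exp (∫ r in (0:ℝ)..s, deriv σ (φ y r)) := fun s => (hD y s).deriv
  have hprim : ∀ y' : ℝ, Continuous (fun s => ∫ r in (0:ℝ)..s, deriv σ (φ y' r)) :=
    fun y' => intervalIntegral.continuous_primitive
      (fun a b => (hσ'cont.comp (hφc y')).intervalIntegrable a b) 0
  have hIbound : ∀ (y' s : ℝ), (∫ r in (0:ℝ)..s, deriv σ (φ y' r)) ≤ C * |s| := by
    intro y' s
    calc (∫ r in (0:ℝ)..s, deriv σ (φ y' r)) ≤ |∫ r in (0:ℝ)..s, deriv σ (φ y' r)| :=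
        le_abs_self _
      _ ≤ C * |s - 0| := by
          have := intervalIntegral.norm_integral_le_of_norm_le_const (a := 0) (b := s)
            (f := fun r => deriv σ (φ y' r)) (C := C)
            (fun r _ => by rw [Real.norm_eq_abs]; exact (hC _).2.1)
          simpa using this
      _ = C * |s| := by rw [sub_zero]
  have hA' : HasDerivAt (fun y' => ∫ s in (0:ℝ)..x, deriv σ (φ y' s))
      (∫ s in (0:ℝ)..x, deriv (deriv σ) (φ y s)
        * Real.exp (∫ r in (0:ℝ)..s, deriv σ (φ y r))) y := by
    have := intervalIntegral.hasDerivAt_integral_of_dominated_loc_of_deriv_le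
      (F := fun y' s => deriv σ (φ y' s))
      (F' := fun y' s => deriv (deriv σ) (φ y' s)
        * Real.exp (∫ r in (0:ℝ)..s, deriv σ (φ y' r)))
      (x₀ := y) (a := 0) (b := x) (μ := volume)
      (bound := fun _ => C * Real.exp (C * |x|)) (ball_mem_nhds y zero_lt_one)
      (Eventually.of_forall fun y' => (hσ'cont.comp (hφc y')).aestronglyMeasurable)
      ((hσ'cont.comp (hφc y)).intervalIntegrable _ _)
      (((hσ''cont.comp (hφc y)).mul
        (Real.continuous_exp.comp (hprim y))).aestronglyMeasurable)
      ?_ (intervalIntegrable_const) ?_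
    · exact this.2
    · refine Eventually.of_forall fun s hs => fun y' _ => ?_
      have h1 : |deriv (deriv σ) (φ y' s)| ≤ C := (hC _).2.2
      have h2 : Real.exp (∫ r in (0:ℝ)..s, deriv σ (φ y' r)) ≤ Real.exp (C * |x|) := by
        apply Real.exp_le_exp.mpr
        calc (∫ r in (0:ℝ)..s, deriv σ (φ y' r)) ≤ C * |s| := hIbound y' s
          _ ≤ C * |x| := by nlinarith [habs x s hs]
      calc ‖deriv (deriv σ) (φ y' s) * Real.exp (∫ r in (0:ℝ)..s, deriv σ (φ y' r))‖
          = |deriv (deriv σ) (φ y' s)| * Real.exp (∫ r in (0:ℝ)..s, deriv σ (φ y' r)) := by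
            rw [norm_mul, Real.norm_eq_abs, Real.norm_eq_abs, Real.abs_exp]
        _ ≤ C * Real.exp (C * |x|) := by
            nlinarith [Real.exp_pos (∫ r in (0:ℝ)..s, deriv σ (φ y' r)),
              abs_nonneg (deriv (deriv σ) (φ y' s)), Real.exp_pos (C * |x|)]
    · refine Eventually.of_forall fun s hs => fun y' _ => ?_
      have := HasDerivAt.comp y' (hσ'' (φ y' s)) (hD y' s)
      exact this
  have hbdiff : Differentiable ℝ b := hb.differentiable one_ne_zero
  have hBcomp : HasDerivAt (fun y' => b (φ y' x))
      (deriv b (φ y x) * Real.exp (∫ s in (0:ℝ)..x, deriv σ (φ y s))) y := by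
    have := HasDerivAt.comp y ((hbdiff (φ y x)).hasDerivAt) (hD y x)
    exact this
  have hexp : HasDerivAt (fun y' => Real.exp (-(∫ s in (0:ℝ)..x, deriv σ (φ y' s))))
      (Real.exp (-(∫ s in (0:ℝ)..x, deriv σ (φ y s)))
        * -(∫ s in (0:ℝ)..x, deriv (deriv σ) (φ y s)
          * Real.exp (∫ r in (0:ℝ)..s, deriv σ (φ y r)))) y := (hA'.neg).exp
  have hprod := hexp.mul hBcomp
  have hfun : (fun y' => f x y')
      = fun y' => Real.exp (-(∫ s in (0:ℝ)..x, deriv σ (φ y' s))) * b (φ y' x) :=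
    funext fun y' => hf x y'
  have hJd : (∫ s in (0:ℝ)..x, deriv (deriv σ) (φ y s) * deriv (fun z => φ z s) y)
      = ∫ s in (0:ℝ)..x, deriv (deriv σ) (φ y s)
        * Real.exp (∫ r in (0:ℝ)..s, deriv σ (φ y r)) :=
    intervalIntegral.integral_congr (fun s _ => by rw [hDeriv_eq])
  rw [hfun, hf x y, hJd]
  refine hprod.congr_deriv ?_
  rw [Real.exp_neg]
  have hex := Real.exp_ne_zero (∫ s in (0:ℝ)..x, deriv σ (φ y s))
  field_simp
  ring
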